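/- Let S and T be simple, locally finite hypergraphs and g : Γ_S(s) → Γ_T(t) an isomorphism of connected components with g(s) = t, and let f be the induced vertex bijection (defined by {f(v)} = g(x_s(v)) ⊕ g(y_s(v))). Then for every r in Γ_S(s), g(r) = f[r] ⊕ c, where c = f[s] ⊕ t and f[r] denotes the image of r under f. -/

import Mathlib

open scoped symmDiff

variable {V : Type*}

def Indep (E : Set (Finset V)) (s : Set V) : Prop := ∀ e ∈ E, ¬ ((e : Set V) ⊆ s)

def SimpleHG (E : Set (Finset V)) : Prop :=
  (∀ e ∈ E, 1 < e.card) ∧ ∀ e ∈ E, ∀ e' ∈ E, e ⊆ e' → e = e'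

def LocFin (E : Set (Finset V)) : Prop := ∀ v : V, {e ∈ E | v ∈ e}.Finite

def Nbr (E : Set (Finset V)) (v w : V) : Prop := ∃ e ∈ E, v ∈ e ∧ w ∈ e

def Gamma (E : Set (Finset V)) : SimpleGraph {s : Set V // Indep E s} where
  Adj s t := ∃ v, s.1 ∆ t.1 = {v}
  symm := ⟨fun s t ⟨v, h⟩ => ⟨v, by rwa [symmDiff_comm]⟩⟩
  loopless := ⟨fun s ⟨v, h⟩ => by
    rw [symmDiff_self] at h
    exact absurd h.symm (Set.singleton_ne_empty v)⟩

def Comp (E : Set (Finset V)) (s : Set V) : Set {t : Set V // Indep E t} :=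
  {t | (s ∆ t.1).Finite}

def GammaComp (E : Set (Finset V)) (s : Set V) : SimpleGraph (Comp E s) :=
  (Gamma E).induce (Comp E s)

def xset (E : Set (Finset V)) (s : Set V) (v : V) : Set V :=
  s \ insert v {w | Nbr E v w}

def yset (E : Set (Finset V)) (s : Set V) (v : V) : Set V :=
  insert v (xset E s v)

def IsIsoHG {V W : Type*} (ES : Set (Finset V)) (ET : Set (Finset W)) (f : V → W) : Prop :=
  Function.Bijective f ∧ ∀ e : Finset V, e ∈ ES ↔ ∃ e' ∈ ET, (e' : Set W) = f '' (e : Set V)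

section aux2
variable {α : Type*}




lemma sd_insert {r : Set α} {v : α} (hv : v ∉ r) : r ∆ insert v r = {v} := by
  ext w
  by_cases h : w = v <;> simp [Set.mem_symmDiff, h, hv]

lemma sd_diff_singleton {r : Set α} {u : α} (hu : u ∈ r) : r ∆ (r \ {u}) = {u} := by
  ext w
  by_cases h : w = u <;> simp [Set.mem_symmDiff, h, hu]

lemma insert_sd_insert {A B : Set α} {v : α} (hA : v ∉ A) (hB : v ∉ B) :
    insert v A ∆ insert v B = A ∆ B := by
  ext w
  by_cases h : w = v <;> simp [Set.mem_symmDiff, h, hA, hB]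

lemma insert_eq_sd {A : Set α} {v : α} (hv : v ∉ A) : insert v A = A ∆ {v} := by
  ext w
  by_cases h : w = v <;> simp [Set.mem_symmDiff, h, hv]

lemma diff_sd {r x : Set α} {u : α} (hu : u ∈ r) (hux : u ∉ x) :
    (r \ {u}) ∆ x = (r ∆ x) \ {u} := by
  ext w
  by_cases h : w = u <;> simp [Set.mem_symmDiff, h, hu, hux]

lemma insert_sd {r x : Set α} {u : α} (hu : u ∉ r) (hux : u ∈ x) :
    (insert u r) ∆ x = (r ∆ x) \ {u} := by
  ext w
  by_cases h : w = u <;> simp [Set.mem_symmDiff, h, hu, hux]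

lemma singleton_cancel {p q m n : α} (h : ({p} : Set α) ∆ {q} = {m} ∆ {n})
    (hpm : p ≠ m) (hpn : p ≠ n) : p = q := by
  by_contra hpq
  have hp : p ∈ ({p} : Set α) ∆ {q} := by simp [Set.mem_symmDiff, hpq]
  rw [h] at hp
  simp [Set.mem_symmDiff, hpm, hpn] at hp

lemma sd4 {A B C D : Set α} : (A ∆ B) ∆ (C ∆ D) = (A ∆ C) ∆ (B ∆ D) := by
  ext w; simp [Set.mem_symmDiff]; tauto

lemma sd_cancel_left {A B C : Set α} (h : A ∆ B = A ∆ C) : B = C := by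
  have := congrArg (fun X => A ∆ X) h
  simpa [symmDiff_symmDiff_cancel_left] using this

end aux2
lemma indep_mono {E : Set (Finset V)} {s t : Set V} (h : Indep E s) (hts : t ⊆ s) :
    Indep E t := fun e he hsub => h e he (hsub.trans hts)

lemma nbr_finite {E : Set (Finset V)} (hlf : LocFin E) (v : V) : {w | Nbr E v w}.Finite := by
  have hsub : {w | Nbr E v w} ⊆ ⋃ e ∈ {e ∈ E | v ∈ e}, (e : Set V) := by
    rintro w ⟨e, he, hv, hw⟩
    exact Set.mem_biUnion ⟨he, hv⟩ hw
  exact (Set.Finite.biUnion (hlf v) (fun e _ => e.finite_toSet)).subset hsub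

lemma xset_subset (E : Set (Finset V)) (s : Set V) (v : V) : xset E s v ⊆ s :=
  Set.diff_subset

lemma not_mem_xset (E : Set (Finset V)) (s : Set V) (v : V) : v ∉ xset E s v := by
  intro h
  exact h.2 (Set.mem_insert v _)

lemma yset_indep {E : Set (Finset V)} (hsimp : SimpleHG E) {s : Set V} (hs : Indep E s)
    (v : V) : Indep E (yset E s v) := by
  intro e he hsub
  by_cases hv : v ∈ e
  · obtain ⟨w, hw, hwv⟩ := Finset.exists_mem_ne (hsimp.1 e he) v
    have hwy : w ∈ yset E s v := hsub hw
    rcases hwy with h | h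
    · exact hwv h
    · exact h.2 (Set.mem_insert_of_mem _ ⟨e, he, hv, hw⟩)
  · apply hs e he
    intro w hw
    rcases hsub hw with h | h
    · exact absurd (h ▸ hw) hv
    · exact h.1

lemma xset_comp {E : Set (Finset V)} (hlf : LocFin E) {s : Set V} (v : V) :
    (s ∆ xset E s v).Finite := by
  apply (Set.Finite.insert v (nbr_finite hlf v)).subset
  intro w hw
  rcases Set.mem_symmDiff.1 hw with ⟨hws, hwx⟩ | ⟨hwx, hws⟩
  · by_contra hni
    exact hwx ⟨hws, hni⟩
  · exact absurd (xset_subset E s v hwx) hws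

lemma yset_comp {E : Set (Finset V)} (hlf : LocFin E) {s : Set V} (v : V) :
    (s ∆ yset E s v).Finite := by
  apply (Set.Finite.insert v (nbr_finite hlf v)).subset
  intro w hw
  rcases Set.mem_symmDiff.1 hw with ⟨hws, hwy⟩ | ⟨hwy, hws⟩
  · by_contra hni
    exact hwy (Set.mem_insert_of_mem _ ⟨hws, hni⟩)
  · rcases hwy with h | h
    · exact h ▸ Set.mem_insert _ _
    · exact absurd (xset_subset E s v h) hws

lemma gammaComp_adj {E : Set (Finset V)} {s : Set V} (a b : Comp E s) :
    (GammaComp E s).Adj a b ↔ ∃ v, a.1.1 ∆ b.1.1 = {v} := Iff.rfl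
section aux3
variable {α : Type*}
lemma sd_elim1 {A B C : Set α} : (A ∆ B) ∆ (A ∆ C) = B ∆ C := by
  ext w; simp [Set.mem_symmDiff]; tauto

lemma sd_elim2 {A B C : Set α} : (A ∆ B) ∆ (B ∆ C) = A ∆ C := by
  ext w; simp [Set.mem_symmDiff]; tauto

lemma sd_abcb {A B C : Set α} : ((A ∆ B) ∆ C) ∆ B = A ∆ C := by
  ext w; simp [Set.mem_symmDiff]; tauto

lemma sd_rc {A B C : Set α} : (A ∆ B) ∆ C = (A ∆ C) ∆ B := by
  ext w; simp [Set.mem_symmDiff]; tauto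

lemma eq_sd_left {A B C : Set α} (h : A ∆ B = C) : B = A ∆ C := by
  rw [← h, symmDiff_symmDiff_cancel_left]

lemma eq_sd_right {A B C : Set α} (h : A ∆ B = C) : A = B ∆ C := by
  rw [← h, symmDiff_comm A B, symmDiff_symmDiff_cancel_left]
end aux3

section main
variable {VS VT : Type*} {ES : Set (Finset VS)} {ET : Set (Finset VT)}
  {s : Set VS} {t : Set VT}

lemma comp_ext {E : Set (Finset V)} {S : Set V} {a b : Comp E S} (h : a.1.1 = b.1.1) :
    a = b := Subtype.ext (Subtype.ext h)

lemma map_edge (g : GammaComp ES s ≃g GammaComp ET t) {a b : Comp ES s} {v : VS}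
    (h : a.1.1 ∆ b.1.1 = {v}) : ∃ w, (g a).1.1 ∆ (g b).1.1 = {w} :=
  g.map_adj_iff.2 ⟨v, h⟩

lemma cycle4 (g : GammaComp ES s ≃g GammaComp ET t) (a b c d : Comp ES s) {u v : VS}
    (hab : a.1.1 ∆ b.1.1 = {v}) (hcd : c.1.1 ∆ d.1.1 = {v})
    (hac : a.1.1 ∆ c.1.1 = {u}) (hbd : b.1.1 ∆ d.1.1 = {u}) (huv : u ≠ v) :
    (g a).1.1 ∆ (g b).1.1 = (g c).1.1 ∆ (g d).1.1 := by
  obtain ⟨p, hp⟩ := map_edge g hab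
  obtain ⟨q, hq⟩ := map_edge g hcd
  obtain ⟨m, hm⟩ := map_edge g hac
  obtain ⟨n, hn⟩ := map_edge g hbd
  have key : ∀ x y : Comp ES s, x.1.1 ∆ y.1.1 = {v} ∆ {u} →
      (g x).1.1 ∆ (g y).1.1 ≠ ⊥ := by
    intro x y hxy hbot
    have hxy' : x = y := g.injective (comp_ext (symmDiff_eq_bot.mp hbot))
    rw [hxy', symmDiff_self] at hxy
    have : v ∈ ({v} : Set VS) ∆ {u} := by
      simp [Set.mem_symmDiff, huv.symm]
    rw [← hxy] at this
    exact this
  have hbc : b.1.1 ∆ c.1.1 = {v} ∆ {u} := by rw [← hab, ← hac, sd_elim1]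
  have had : a.1.1 ∆ d.1.1 = {v} ∆ {u} := by rw [← hab, ← hbd, sd_elim2]
  have hgbc : (g b).1.1 ∆ (g c).1.1 = {p} ∆ {m} := by rw [← hp, ← hm, sd_elim1]
  have hgad : (g a).1.1 ∆ (g d).1.1 = {p} ∆ {n} := by rw [← hp, ← hn, sd_elim2]
  have hpm : p ≠ m := by
    intro h
    exact key b c hbc (by rw [hgbc, h, symmDiff_self])
  have hpn : p ≠ n := by
    intro h
    exact key a d had (by rw [hgad, h, symmDiff_self])
  have hpq : ({p} : Set VT) ∆ {q} = {m} ∆ {n} := by rw [← hp, ← hq, ← hm, ← hn, sd4]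
  rw [hp, hq, singleton_cancel hpq hpm hpn]
end main
section main2
variable {VS VT : Type*} {ES : Set (Finset VS)} {ET : Set (Finset VT)}
  {s : Set VS} {t : Set VT}

lemma comp_mem {E : Set (Finset VS)} {S r : Set VS} {hrI : Indep E r}
    (h : (S ∆ r).Finite) : (⟨r, hrI⟩ : {u : Set VS // Indep E u}) ∈ Comp E S := h

lemma edge_label (hSsimp : SimpleHG ES) (hSlf : LocFin ES) (hs : Indep ES s)
    (g : GammaComp ES s ≃g GammaComp ET t) (f : VS → VT)
    (hf : ∀ (v : VS) (hxI : Indep ES (xset ES s v)) (hyI : Indep ES (yset ES s v))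
      (hxC : (⟨xset ES s v, hxI⟩ : {u : Set VS // Indep ES u}) ∈ Comp ES s)
      (hyC : (⟨yset ES s v, hyI⟩ : {u : Set VS // Indep ES u}) ∈ Comp ES s),
      (g ⟨⟨xset ES s v, hxI⟩, hxC⟩).1.1 ∆ (g ⟨⟨yset ES s v, hyI⟩, hyC⟩).1.1 = {f v}) :
    ∀ (n : ℕ) (r : Set VS) (v : VS), v ∉ r →
      ∀ (hrI : Indep ES r) (hrC : (⟨r, hrI⟩ : {u : Set VS // Indep ES u}) ∈ Comp ES s)
        (hiI : Indep ES (insert v r))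
        (hiC : (⟨insert v r, hiI⟩ : {u : Set VS // Indep ES u}) ∈ Comp ES s),
      (r ∆ xset ES s v).ncard ≤ n →
      (g ⟨⟨r, hrI⟩, hrC⟩).1.1 ∆ (g ⟨⟨insert v r, hiI⟩, hiC⟩).1.1 = {f v} := by
  intro n
  induction n with
  | zero =>
    intro r v hv hrI hrC hiI hiC hcard
    have hsr : (s ∆ r).Finite := hrC
    have hrs : (r ∆ s).Finite := by rwa [symmDiff_comm] at hsr
    have hfin : (r ∆ xset ES s v).Finite :=
      Set.Finite.subset (hrs.union (xset_comp hSlf v)) (symmDiff_triangle r s _)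
    have h0 : (r ∆ xset ES s v).ncard = 0 := Nat.le_zero.mp hcard
    have hrx : r = xset ES s v := by
      have := (Set.ncard_eq_zero hfin).mp h0
      exact symmDiff_eq_bot.mp this
    subst hrx
    exact hf v hrI hiI hrC hiC
  | succ n IH =>
    intro r v hv hrI hrC hiI hiC hcard
    have hsr : (s ∆ r).Finite := hrC
    have hsi : (s ∆ insert v r).Finite := hiC
    have hrs : (r ∆ s).Finite := by rwa [symmDiff_comm] at hsr
    have hfin : (r ∆ xset ES s v).Finite :=
      Set.Finite.subset (hrs.union (xset_comp hSlf v)) (symmDiff_triangle r s _)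
    by_cases hrx : r = xset ES s v
    · subst hrx
      exact hf v hrI hiI hrC hiC
    by_cases hex : (r \ xset ES s v).Nonempty
    · -- remove u ∈ r \ x
      obtain ⟨u, hur, hux⟩ := hex
      have huv : u ≠ v := fun h => hv (h ▸ hur)
      have hvr' : v ∉ r \ {u} := fun h => hv h.1
      have hvr'' : v ∉ r := hv
      have hr'I : Indep ES (r \ {u}) := indep_mono hrI Set.diff_subset
      have hi'I : Indep ES (insert v (r \ {u})) :=
        indep_mono hiI (Set.insert_subset_insert Set.diff_subset)
      have hr'C : (s ∆ (r \ {u})).Finite := by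
        apply Set.Finite.subset (hsr.union (Set.finite_singleton u))
        calc s ∆ (r \ {u}) ≤ s ∆ r ⊔ r ∆ (r \ {u}) := symmDiff_triangle _ _ _
          _ = s ∆ r ∪ {u} := by rw [sd_diff_singleton hur]; rfl
      have hi'C : (s ∆ insert v (r \ {u})).Finite := by
        apply Set.Finite.subset (hsi.union (Set.finite_singleton u))
        calc s ∆ insert v (r \ {u})
            ≤ s ∆ insert v r ⊔ insert v r ∆ insert v (r \ {u}) := symmDiff_triangle _ _ _
          _ = s ∆ insert v r ∪ {u} := by
              rw [insert_sd_insert hv hvr', sd_diff_singleton hur]; rfl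
      have hstep := cycle4 g ⟨⟨r, hrI⟩, hrC⟩ ⟨⟨insert v r, hiI⟩, hiC⟩
        ⟨⟨r \ {u}, hr'I⟩, hr'C⟩ ⟨⟨insert v (r \ {u}), hi'I⟩, hi'C⟩
        (sd_insert hv) (sd_insert hvr') (sd_diff_singleton hur)
        (by rw [insert_sd_insert hv hvr']; exact sd_diff_singleton hur) huv
      rw [hstep]
      apply IH (r \ {u}) v hvr' hr'I hr'C hi'I hi'C
      rw [diff_sd hur hux]
      have hlt := Set.ncard_diff_singleton_lt_of_mem
        (Set.mem_symmDiff.2 (Or.inl ⟨hur, hux⟩)) hfin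
      omega
    · -- r ⊆ x, add u ∈ x \ r
      have hsub : r ⊆ xset ES s v := by
        intro w hw
        by_contra hwn
        exact hex ⟨w, hw, hwn⟩
      have hex2 : (xset ES s v \ r).Nonempty := by
        rw [Set.nonempty_iff_ne_empty]
        intro h
        exact hrx (Set.Subset.antisymm hsub (Set.diff_eq_empty.mp h))
      obtain ⟨u, hux, hur⟩ := hex2
      have huv : u ≠ v := fun h => not_mem_xset ES s v (h ▸ hux)
      have hvr' : v ∉ insert u r := by
        rintro (h | h)
        · exact huv h.symm
        · exact hv h
      have hr'sub : insert u r ⊆ xset ES s v := Set.insert_subset hux hsub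
      have hr'I : Indep ES (insert u r) :=
        indep_mono (indep_mono hs (xset_subset ES s v)) hr'sub
      have hi'I : Indep ES (insert v (insert u r)) :=
        indep_mono (yset_indep hSsimp hs v) (Set.insert_subset_insert hr'sub)
      have hr'C : (s ∆ insert u r).Finite := by
        apply Set.Finite.subset (hsr.union (Set.finite_singleton u))
        calc s ∆ insert u r ≤ s ∆ r ⊔ r ∆ insert u r := symmDiff_triangle _ _ _
          _ = s ∆ r ∪ {u} := by rw [sd_insert hur]; rfl
      have hi'C : (s ∆ insert v (insert u r)).Finite := by
        apply Set.Finite.subset (hsi.union (Set.finite_singleton u))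
        calc s ∆ insert v (insert u r)
            ≤ s ∆ insert v r ⊔ insert v r ∆ insert v (insert u r) := symmDiff_triangle _ _ _
          _ = s ∆ insert v r ∪ {u} := by
              rw [insert_sd_insert hv hvr', sd_insert hur]; rfl
      have hstep := cycle4 g ⟨⟨r, hrI⟩, hrC⟩ ⟨⟨insert v r, hiI⟩, hiC⟩
        ⟨⟨insert u r, hr'I⟩, hr'C⟩ ⟨⟨insert v (insert u r), hi'I⟩, hi'C⟩
        (sd_insert hv) (sd_insert hvr') (sd_insert hur)
        (by rw [insert_sd_insert hv hvr']; exact sd_insert hur) huv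
      rw [hstep]
      apply IH (insert u r) v hvr' hr'I hr'C hi'I hi'C
      rw [insert_sd hur hux]
      have hlt := Set.ncard_diff_singleton_lt_of_mem
        (Set.mem_symmDiff.2 (Or.inr ⟨hux, hur⟩)) hfin
      omega

end main2
section main3
variable {VS VT : Type*} {ES : Set (Finset VS)} {ET : Set (Finset VT)}
  {s : Set VS} {t : Set VT}

lemma f_inj (hSsimp : SimpleHG ES) (hSlf : LocFin ES) (hs : Indep ES s)
    (g : GammaComp ES s ≃g GammaComp ET t) (f : VS → VT)
    (hf : ∀ (v : VS) (hxI : Indep ES (xset ES s v)) (hyI : Indep ES (yset ES s v))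
      (hxC : (⟨xset ES s v, hxI⟩ : {u : Set VS // Indep ES u}) ∈ Comp ES s)
      (hyC : (⟨yset ES s v, hyI⟩ : {u : Set VS // Indep ES u}) ∈ Comp ES s),
      (g ⟨⟨xset ES s v, hxI⟩, hxC⟩).1.1 ∆ (g ⟨⟨yset ES s v, hyI⟩, hyC⟩).1.1 = {f v})
    {r : Set VS} (hrI : Indep ES r)
    (hrC : (⟨r, hrI⟩ : {u : Set VS // Indep ES u}) ∈ Comp ES s)
    {u w : VS} (hu : u ∈ r) (hw : w ∈ r) (hfuw : f u = f w) : u = w := by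
  by_contra hne
  have hsr : (s ∆ r).Finite := hrC
  have mk : ∀ z ∈ r, ∃ (hI : Indep ES (r \ {z}))
      (hC : (⟨r \ {z}, hI⟩ : {x : Set VS // Indep ES x}) ∈ Comp ES s),
      (g ⟨⟨r \ {z}, hI⟩, hC⟩).1.1 ∆ (g ⟨⟨r, hrI⟩, hrC⟩).1.1 = {f z} := by
    intro z hz
    have hI : Indep ES (r \ {z}) := indep_mono hrI Set.diff_subset
    have hC : (s ∆ (r \ {z})).Finite := by
      apply Set.Finite.subset (hsr.union (Set.finite_singleton z))
      calc s ∆ (r \ {z}) ≤ s ∆ r ⊔ r ∆ (r \ {z}) := symmDiff_triangle _ _ _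
        _ = s ∆ r ∪ {z} := by rw [sd_diff_singleton hz]; rfl
    refine ⟨hI, hC, ?_⟩
    have hzmem : z ∉ r \ {z} := fun h => h.2 rfl
    have heq : insert z (r \ {z}) = r := by
      rw [Set.insert_diff_singleton]
      exact Set.insert_eq_self.2 hz
    have hiI : Indep ES (insert z (r \ {z})) := by rw [heq]; exact hrI
    have hiC : (s ∆ insert z (r \ {z})).Finite := by rw [heq]; exact hsr
    have h := edge_label hSsimp hSlf hs g f hf ((r \ {z}) ∆ xset ES s z).ncard
      (r \ {z}) z hzmem hI hC hiI hiC le_rfl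
    have hel : (⟨⟨insert z (r \ {z}), hiI⟩, hiC⟩ : Comp ES s) = ⟨⟨r, hrI⟩, hrC⟩ :=
      comp_ext heq
    rwa [hel] at h
  obtain ⟨hIu, hCu, h1⟩ := mk u hu
  obtain ⟨hIw, hCw, h2⟩ := mk w hw
  rw [hfuw] at h1
  have h3 : (g ⟨⟨r \ {u}, hIu⟩, hCu⟩).1.1 = (g ⟨⟨r \ {w}, hIw⟩, hCw⟩).1.1 := by
    have h4 := h1.trans h2.symm
    rw [symmDiff_comm (g ⟨⟨r \ {u}, hIu⟩, hCu⟩).1.1,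
      symmDiff_comm (g ⟨⟨r \ {w}, hIw⟩, hCw⟩).1.1] at h4
    exact sd_cancel_left h4
  have h5 : (⟨⟨r \ {u}, hIu⟩, hCu⟩ : Comp ES s) = ⟨⟨r \ {w}, hIw⟩, hCw⟩ :=
    g.injective (comp_ext h3)
  have h6 : r \ {u} = r \ {w} := congrArg (fun x => x.1.1) h5
  have h7 : u ∈ r \ {w} := ⟨hu, fun h => hne h⟩
  rw [← h6] at h7
  exact h7.2 rfl

end main3
theorem stmt4 {VS VT : Type*} (ES : Set (Finset VS)) (ET : Set (Finset VT))
    (hSsimp : SimpleHG ES) (hTsimp : SimpleHG ET) (hSlf : LocFin ES) (hTlf : LocFin ET)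
    (s : Set VS) (t : Set VT) (hs : Indep ES s) (ht : Indep ET t)
    (g : GammaComp ES s ≃g GammaComp ET t)
    (hsC : (⟨s, hs⟩ : {u : Set VS // Indep ES u}) ∈ Comp ES s)
    (hgst : (g ⟨⟨s, hs⟩, hsC⟩).1.1 = t)
    (f : VS → VT)
    (hf : ∀ (v : VS) (hxI : Indep ES (xset ES s v)) (hyI : Indep ES (yset ES s v))
      (hxC : (⟨xset ES s v, hxI⟩ : {u : Set VS // Indep ES u}) ∈ Comp ES s)
      (hyC : (⟨yset ES s v, hyI⟩ : {u : Set VS // Indep ES u}) ∈ Comp ES s),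
      (g ⟨⟨xset ES s v, hxI⟩, hxC⟩).1.1 ∆ (g ⟨⟨yset ES s v, hyI⟩, hyC⟩).1.1 = {f v}) :
    ∀ r : Comp ES s, (g r).1.1 = (f '' r.1.1) ∆ ((f '' s) ∆ t) := by
  suffices h : ∀ (n : ℕ) (r : Comp ES s), (r.1.1 ∆ s).ncard ≤ n →
      (g r).1.1 = (f '' r.1.1) ∆ ((f '' s) ∆ t) by
    intro r
    exact h _ r le_rfl
  have base : ∀ r : Comp ES s, r.1.1 = s → (g r).1.1 = (f '' r.1.1) ∆ ((f '' s) ∆ t) := by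
    intro r hr
    have := comp_ext (E := ES) (S := s) (a := r) (b := ⟨⟨s, hs⟩, hsC⟩) hr
    rw [this, hgst]
    exact (symmDiff_symmDiff_cancel_left _ _).symm
  intro n
  induction n with
  | zero =>
    intro r hcard
    have hfin : (r.1.1 ∆ s).Finite := by
      rw [symmDiff_comm]; exact r.2
    exact base r (symmDiff_eq_bot.mp ((Set.ncard_eq_zero hfin).mp (Nat.le_zero.mp hcard)))
  | succ n IH =>
    intro r hcard
    have hsr : (s ∆ r.1.1).Finite := r.2
    have hfin : (r.1.1 ∆ s).Finite := by rw [symmDiff_comm]; exact r.2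
    by_cases hpeq : r.1.1 = s
    · exact base r hpeq
    by_cases hex : (r.1.1 \ s).Nonempty
    · obtain ⟨u, hur, hus⟩ := hex
      have hIr' : Indep ES (r.1.1 \ {u}) := indep_mono r.1.2 Set.diff_subset
      have hCr' : (s ∆ (r.1.1 \ {u})).Finite := by
        apply Set.Finite.subset (hsr.union (Set.finite_singleton u))
        calc s ∆ (r.1.1 \ {u}) ≤ s ∆ r.1.1 ⊔ r.1.1 ∆ (r.1.1 \ {u}) := symmDiff_triangle _ _ _
          _ = s ∆ r.1.1 ∪ {u} := by rw [sd_diff_singleton hur]; rfl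
      have humem : u ∉ r.1.1 \ {u} := fun h => h.2 rfl
      have heq : insert u (r.1.1 \ {u}) = r.1.1 := by
        rw [Set.insert_diff_singleton]
        exact Set.insert_eq_self.2 hur
      have hiI : Indep ES (insert u (r.1.1 \ {u})) := by rw [heq]; exact r.1.2
      have hiC : (s ∆ insert u (r.1.1 \ {u})).Finite := by rw [heq]; exact hsr
      have hedge := edge_label hSsimp hSlf hs g f hf
        (((r.1.1 \ {u}) ∆ xset ES s u).ncard) (r.1.1 \ {u}) u humem hIr' hCr' hiI hiC le_rfl
      have hel : (⟨⟨insert u (r.1.1 \ {u}), hiI⟩, hiC⟩ : Comp ES s) = r := comp_ext heq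
      rw [hel] at hedge
      have hgr : (g r).1.1 = (g ⟨⟨r.1.1 \ {u}, hIr'⟩, hCr'⟩).1.1 ∆ {f u} := eq_sd_left hedge
      have hIH : (g ⟨⟨r.1.1 \ {u}, hIr'⟩, hCr'⟩).1.1 = (f '' (r.1.1 \ {u})) ∆ ((f '' s) ∆ t) := by
        apply IH
        rw [show (r.1.1 \ {u}) ∆ s = (r.1.1 ∆ s) \ {u} from diff_sd hur hus]
        have hlt := Set.ncard_diff_singleton_lt_of_mem
          (Set.mem_symmDiff.2 (Or.inl ⟨hur, hus⟩)) hfin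
        omega
      have hfu : f u ∉ f '' (r.1.1 \ {u}) := by
        rintro ⟨w, hwr, hwf⟩
        exact hwr.2 (f_inj hSsimp hSlf hs g f hf r.1.2 r.2 hwr.1 hur hwf)
      have himg : f '' r.1.1 = (f '' (r.1.1 \ {u})) ∆ {f u} := by
        conv_lhs => rw [← heq]
        rw [Set.image_insert_eq, insert_eq_sd hfu]
      rw [hgr, hIH, himg]
      exact sd_rc
    · have hsub : r.1.1 ⊆ s := by
        intro w hw
        by_contra hwn
        exact hex ⟨w, hw, hwn⟩
      have hex2 : (s \ r.1.1).Nonempty := by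
        rw [Set.nonempty_iff_ne_empty]
        intro h
        exact hpeq (Set.Subset.antisymm hsub (Set.diff_eq_empty.mp h))
      obtain ⟨u, hus, hur⟩ := hex2
      have hIr' : Indep ES (insert u r.1.1) :=
        indep_mono hs (Set.insert_subset hus hsub)
      have hCr' : (s ∆ insert u r.1.1).Finite := by
        apply Set.Finite.subset (hsr.union (Set.finite_singleton u))
        calc s ∆ insert u r.1.1 ≤ s ∆ r.1.1 ⊔ r.1.1 ∆ insert u r.1.1 := symmDiff_triangle _ _ _
          _ = s ∆ r.1.1 ∪ {u} := by rw [sd_insert hur]; rfl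
      have hel : (⟨⟨r.1.1, r.1.2⟩, r.2⟩ : Comp ES s) = r := rfl
      have hedge := edge_label hSsimp hSlf hs g f hf
        ((r.1.1 ∆ xset ES s u).ncard) r.1.1 u hur r.1.2 r.2 hIr' hCr' le_rfl
      rw [hel] at hedge
      have hgr : (g r).1.1 = (g ⟨⟨insert u r.1.1, hIr'⟩, hCr'⟩).1.1 ∆ {f u} :=
        eq_sd_right hedge
      have hIH : (g ⟨⟨insert u r.1.1, hIr'⟩, hCr'⟩).1.1
          = (f '' insert u r.1.1) ∆ ((f '' s) ∆ t) := by
        apply IH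
        rw [show (insert u r.1.1) ∆ s = (r.1.1 ∆ s) \ {u} from insert_sd hur hus]
        have hlt := Set.ncard_diff_singleton_lt_of_mem
          (Set.mem_symmDiff.2 (Or.inr ⟨hus, hur⟩)) hfin
        omega
      have hfu : f u ∉ f '' r.1.1 := by
        rintro ⟨w, hwr, hwf⟩
        exact hur (f_inj hSsimp hSlf hs g f hf hIr' hCr'
          (Set.mem_insert_of_mem _ hwr) (Set.mem_insert _ _) hwf ▸ hwr)
      have himg : f '' insert u r.1.1 = (f '' r.1.1) ∆ {f u} := by
        rw [Set.image_insert_eq, insert_eq_sd hfu]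
      rw [hgr, hIH, himg]
      exact sd_abcb
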